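/- Let α be a composition and let γ ∈ C_2 = {(1^{e_1}, 2, 1^{e_2}, …, 2, 1^{e_k}) : k ≥ 0, e_i ≥ 1 for 1 ≤ i ≤ k−1, e_k ≥ 0} (which includes the empty composition). Then there is a bijection between standard composition tableaux of shape α and those of shape α·γ under which an SCT of shape α with descent composition β corresponds to an SCT of shape α·γ with descent composition β·γ; in particular d_{(α·γ)(β·γ)} = d_{αβ} for all β, and every SCT of shape α·γ has descent composition of the form β·γ. -/

import Mathlib

/-- `SCTChain α U`: the filling `U` of the diagram of the composition `α`
(cells `0`-indexed, rows numbered from the top) arises from a saturated chain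
in the poset `L_C` of compositions, where at each cover step either a new
part `1` is prepended or the leftmost part of a given size is increased by
`1`, and the cell created at the step reaching a composition of size `s` is
filled with `s`. -/
inductive SCTChain : List ℕ → ((ℕ × ℕ) → ℕ) → Prop
  | nil : SCTChain [] (fun _ => 0)
  | prepend {β : List ℕ} {U : (ℕ × ℕ) → ℕ} (h : SCTChain β U) :
      SCTChain (1 :: β)
        (fun c => if c = (0, 0) then β.sum + 1
          else if c.1 = 0 then 0 else U (c.1 - 1, c.2))
  | grow {β : List ℕ} {U : (ℕ × ℕ) → ℕ} (h : SCTChain β U) (i : ℕ)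
      (hi : i < β.length) (hleft : ∀ j < i, β.getD j 0 ≠ β.getD i 0) :
      SCTChain (β.set i (β.getD i 0 + 1))
        (fun c => if c = (i, β.getD i 0) then β.sum + 1 else U c)

/-- `T` is a standard composition tableau of shape `α ⊨ n`: the filling of
the diagram of `α` obtained from a saturated chain
`∅ = α^{n+1} ⋖ ⋯ ⋖ α^1 = α` in `L_C` by placing entry `i` in the cell in
which `α^i` differs from `α^{i+1}` (so the cell created at the step reaching
size `s` receives the entry `n + 1 - s`); entries are `0` off the diagram. -/
def IsSCT (α : List ℕ) (T : (ℕ × ℕ) → ℕ) : Prop :=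
  ∃ U, SCTChain α U ∧ T = fun c => if U c = 0 then 0 else α.sum + 1 - U c

/-- The descent set of a standard composition tableau: those `i` such that
the entry `i+1` lies in a cell weakly to the right of the cell containing
`i`. -/
def desC (T : (ℕ × ℕ) → ℕ) : Set ℕ :=
  {i | 0 < i ∧ ∃ p q : ℕ × ℕ, T p = i ∧ T q = i + 1 ∧ p.2 ≤ q.2}

/-- `set(α) = {α₁, α₁+α₂, …, α₁+⋯+α_{ℓ(α)-1}}`, the subset of `[n-1]`
associated to a composition `α ⊨ n`; `com(T) = β` iff `desC T = compToSet β`. -/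
def compToSet (α : List ℕ) : Set ℕ :=
  {s | ∃ i, 0 < i ∧ i < α.length ∧ s = (α.take i).sum}

/-- The quasisymmetric Schur function `S_α` is F-multiplicity free iff all
standard composition tableaux of shape `α` have pairwise distinct descent
sets. -/
def FmfSCT (α : List ℕ) : Prop :=
  ∀ T T', IsSCT α T → IsSCT α T' → desC T = desC T' → T = T'

/-- Membership in the set
`C₂ = {(1^{e₁}, 2, 1^{e₂}, …, 2, 1^{e_k}) : k ≥ 0, eᵢ ≥ 1 for i < k, e_k ≥ 0}`
of compositions (including the empty composition). -/
inductive InC2 : List ℕ → Prop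
  | nil : InC2 []
  | one {γ : List ℕ} : InC2 γ → InC2 (1 :: γ)
  | one_two {γ : List ℕ} : InC2 γ → InC2 (1 :: 2 :: γ)

set_option maxRecDepth 10000
set_option maxHeartbeats 1000000

namespace SCTAux

/-! ### List helper lemmas -/

lemma getD_set_self : ∀ (l : List ℕ) (i x : ℕ), i < l.length → (l.set i x).getD i 0 = x
  | [], _, _, h => by simp at h
  | _::_, 0, _, _ => by simp
  | a::l, i+1, x, h => by
      simpa using getD_set_self l i x (by simpa using h)

lemma getD_set_ne : ∀ (l : List ℕ) (i x j : ℕ), j ≠ i → (l.set i x).getD j 0 = l.getD j 0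
  | [], _, _, _, _ => by simp
  | a::l, 0, x, 0, h => absurd rfl h
  | a::l, 0, x, j+1, h => by simp
  | a::l, i+1, x, 0, h => by simp
  | a::l, i+1, x, j+1, h => by
      simpa using getD_set_ne l i x j (by omega)

lemma set_getD_self : ∀ (l : List ℕ) (i : ℕ), i < l.length → l.set i (l.getD i 0) = l
  | [], _, h => by simp at h
  | a::l, 0, _ => by simp
  | a::l, i+1, h => by
      simpa using set_getD_self l i (by simpa using h)

lemma sum_set_succ : ∀ (l : List ℕ) (i : ℕ), i < l.length →
    (l.set i (l.getD i 0 + 1)).sum = l.sum + 1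
  | [], _, h => by simp at h
  | a::l, 0, _ => by simp; omega
  | a::l, i+1, h => by
      have ih := sum_set_succ l i (by simpa using h)
      simp only [List.set_cons_succ, List.getD_cons_succ, List.sum_cons] at ih ⊢
      omega

/-! ### Basic facts about `SCTChain` -/

lemma chain_pos {δ : List ℕ} {U} (h : SCTChain δ U) : ∀ x ∈ δ, 0 < x := by
  induction h with
  | nil => simp
  | prepend h ih =>
      intro x hx
      rcases List.mem_cons.1 hx with rfl | hx
      · omega
      · exact ih x hx
  | grow h i hi hleft ih =>
      intro x hx
      rcases List.mem_or_eq_of_mem_set hx with hx | rfl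
      · exact ih x hx
      · omega

lemma chain_support {δ : List ℕ} {U} (h : SCTChain δ U) :
    ∀ c : ℕ × ℕ, U c ≠ 0 → c.1 < δ.length ∧ c.2 < δ.getD c.1 0 := by
  induction h with
  | nil => intro c hc; simp at hc
  | @prepend β U h ih =>
      rintro ⟨a, b⟩ hc
      dsimp only at hc ⊢
      by_cases h0 : ((a, b) : ℕ × ℕ) = (0, 0)
      · rw [Prod.mk.injEq] at h0
        obtain ⟨rfl, rfl⟩ := h0
        simp
      · rw [if_neg h0] at hc
        by_cases ha : a = 0
        · rw [if_pos ha] at hc; exact absurd rfl hc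
        · rw [if_neg ha] at hc
          obtain ⟨k, rfl⟩ := Nat.exists_eq_succ_of_ne_zero ha
          have := ih (k, b) (by simpa using hc)
          dsimp only at this
          refine ⟨by simp; omega, ?_⟩
          simpa using this.2
  | @grow β U h i hi hleft ih =>
      rintro ⟨a, b⟩ hc
      dsimp only at hc ⊢
      by_cases h0 : ((a, b) : ℕ × ℕ) = (i, β.getD i 0)
      · rw [Prod.mk.injEq] at h0
        obtain ⟨rfl, rfl⟩ := h0
        refine ⟨by simpa using hi, ?_⟩
        rw [getD_set_self β a _ hi]
        omega
      · rw [if_neg h0] at hc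
        obtain ⟨h1, h2⟩ := ih (a, b) hc
        dsimp only at h1 h2
        refine ⟨by simpa using h1, ?_⟩
        by_cases hai : a = i
        · subst hai
          rw [getD_set_self β a _ hi]
          omega
        · rw [getD_set_ne β i _ a hai]
          exact h2

lemma chain_facts {δ : List ℕ} {U} (h : SCTChain δ U) :
    (∀ c, U c ≤ δ.sum) ∧ (∀ k, 0 < k → k ≤ δ.sum → ∃ c, U c = k) ∧
      (∀ p q, U p ≠ 0 → U p = U q → p = q) := by
  induction h with
  | nil =>
      refine ⟨by intro c; simp, ?_, by intro p q hp; simp at hp⟩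
      intro k h1 h2; simp at h2; omega
  | @prepend β U h ih =>
      obtain ⟨hb, he, hinj⟩ := ih
      refine ⟨?_, ?_, ?_⟩
      · rintro ⟨a, b⟩
        try dsimp only
        simp only [List.sum_cons]
        split_ifs with h1 h2
        · omega
        · omega
        · have := hb (a - 1, b); omega
      · intro k hk hk'
        simp only [List.sum_cons] at hk'
        by_cases hkk : k = β.sum + 1
        · exact ⟨(0, 0), by simp [hkk]⟩
        · obtain ⟨⟨a, b⟩, hc⟩ := he k hk (by omega)
          refine ⟨(a + 1, b), ?_⟩
          have h1 : ((a + 1, b) : ℕ × ℕ) ≠ (0, 0) := by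
            simp only [ne_eq, Prod.mk.injEq]; omega
          try dsimp only
          rw [if_neg h1, if_neg (by omega : ¬ (a + 1 = 0))]
          simpa using hc
      · rintro ⟨a, b⟩ ⟨a', b'⟩ hp hpq
        dsimp only at hp hpq
        by_cases h1 : ((a, b) : ℕ × ℕ) = (0, 0)
        · rw [if_pos h1] at hpq
          by_cases h2 : ((a', b') : ℕ × ℕ) = (0, 0)
          · rw [Prod.mk.injEq] at h1 h2
            rw [Prod.mk.injEq]; omega
          · rw [if_neg h2] at hpq
            by_cases ha' : a' = 0
            · rw [if_pos ha'] at hpq; omega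
            · rw [if_neg ha'] at hpq
              have := hb (a' - 1, b'); omega
        · rw [if_neg h1] at hp hpq
          by_cases ha : a = 0
          · rw [if_pos ha] at hp; exact absurd rfl hp
          · rw [if_neg ha] at hp hpq
            by_cases h2 : ((a', b') : ℕ × ℕ) = (0, 0)
            · rw [if_pos h2] at hpq
              have := hb (a - 1, b); omega
            · rw [if_neg h2] at hpq
              by_cases ha' : a' = 0
              · rw [if_pos ha'] at hpq; exact absurd hpq hp
              · rw [if_neg ha'] at hpq
                have := hinj (a - 1, b) (a' - 1, b') hp hpq
                rw [Prod.mk.injEq] at this ⊢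
                omega
  | @grow β U h i hi hleft ih =>
      obtain ⟨hb, he, hinj⟩ := ih
      have hsum := sum_set_succ β i hi
      have hU0 : U (i, β.getD i 0) = 0 := by
        by_contra h'
        have := (chain_support h (i, β.getD i 0) h').2
        simp at this
      refine ⟨?_, ?_, ?_⟩
      · rintro ⟨a, b⟩
        try dsimp only
        rw [hsum]
        split_ifs with h1
        · omega
        · have := hb (a, b); omega
      · intro k hk hk'
        rw [hsum] at hk'
        by_cases hkk : k = β.sum + 1
        · exact ⟨(i, β.getD i 0), by simp [hkk]⟩
        · obtain ⟨c, hc⟩ := he k hk (by omega)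
          refine ⟨c, ?_⟩
          have hcne : c ≠ (i, β.getD i 0) := by
            intro h'; rw [h', hU0] at hc; omega
          try dsimp only
          rw [if_neg hcne]; exact hc
      · rintro p q hp hpq
        dsimp only at hp hpq
        by_cases h1 : p = (i, β.getD i 0)
        · rw [if_pos h1] at hpq
          by_cases h2 : q = (i, β.getD i 0)
          · rw [h1, h2]
          · rw [if_neg h2] at hpq
            have := hb q; omega
        · rw [if_neg h1] at hp hpq
          by_cases h2 : q = (i, β.getD i 0)
          · rw [if_pos h2] at hpq
            have := hb p; omega
          · rw [if_neg h2] at hpq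
            exact hinj p q hp hpq

lemma chain_col1 {δ : List ℕ} {U} (h : SCTChain δ U) : ∀ c : ℕ × ℕ, U c = 1 → c.2 = 0 := by
  induction h with
  | nil => intro c hc; simp at hc
  | @prepend β U h ih =>
      rintro ⟨a, b⟩ hc
      dsimp only at hc ⊢
      split_ifs at hc with h1 h2
      · rw [Prod.mk.injEq] at h1; exact h1.2
      · exact ih (a - 1, b) hc
  | @grow β U h i hi hleft ih =>
      rintro ⟨a, b⟩ hc
      dsimp only at hc ⊢
      split_ifs at hc with h1
      · exfalso
        have hmem : β.getD i 0 ∈ β := by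
          rw [List.getD_eq_getElem β 0 hi]
          exact List.getElem_mem hi
        have h2 := chain_pos h _ hmem
        have h3 : β.getD i 0 ≤ β.sum := List.le_sum_of_mem hmem
        omega
      · exact ih (a, b) hc

end SCTAux

namespace SCTAux

/-! ### Appending a chain at the bottom -/

lemma chain_append {α : List ℕ} {U} (h : SCTChain α U) :
    ∀ {γ : List ℕ} {V}, SCTChain γ V →
      SCTChain (α ++ γ)
        (fun c => if α.length ≤ c.1 then V (c.1 - α.length, c.2)
          else if U c = 0 then 0 else U c + γ.sum) := by
  induction h with
  | nil =>
      intro γ V hV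
      convert hV using 1
      · simp
      funext c
      obtain ⟨a, b⟩ := c
      simp
  | @prepend β U h ih =>
      intro γ V hV
      have H := SCTChain.prepend (ih hV)
      convert H using 1
      · simp
      funext c
      obtain ⟨a, b⟩ := c
      rcases a with _ | k
      · dsimp only
        simp only [Prod.mk.injEq, List.length_cons, List.sum_append]
        split_ifs <;> (try (simp only [false_and, and_false, true_and, and_true, List.append_eq, List.sum_append, List.sum_cons, List.sum_nil] at *)) <;> first | contradiction | omega
      · dsimp only
        simp only [Prod.mk.injEq, List.length_cons, List.sum_append,
          Nat.add_sub_add_right, Nat.add_sub_cancel]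
        split_ifs <;> (try (simp only [false_and, and_false, true_and, and_true, List.append_eq, List.sum_append, List.sum_cons, List.sum_nil] at *)) <;> first | contradiction | omega
  | @grow β U h i hi hleft ih =>
      intro γ V hV
      have hlen : i < (β ++ γ).length := by simp; omega
      have hleft' : ∀ j < i, (β ++ γ).getD j 0 ≠ (β ++ γ).getD i 0 := by
        intro j hj
        rw [List.getD_append _ _ _ _ (by omega), List.getD_append _ _ _ _ hi]
        exact hleft j hj
      have H := SCTChain.grow (ih hV) i hlen hleft'
      rw [List.getD_append _ _ _ _ hi, List.set_append_left _ _ hi] at H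
      convert H using 1
      funext c
      obtain ⟨a, b⟩ := c
      try dsimp only
      simp only [Prod.mk.injEq, List.length_set, List.sum_append]
      split_ifs <;> (try (simp only [false_and, and_false, true_and, and_true, List.append_eq, List.sum_append, List.sum_cons, List.sum_nil] at *)) <;> first | contradiction | omega

def fill1 (α : List ℕ) (U : (ℕ × ℕ) → ℕ) : (ℕ × ℕ) → ℕ := fun c =>
  if c = (α.length, 0) then 1 else if U c = 0 then 0 else U c + 1

def fill12 (α : List ℕ) (U : (ℕ × ℕ) → ℕ) : (ℕ × ℕ) → ℕ := fun c =>
  if c = (α.length + 1, 0) then 1 else if c = (α.length + 1, 1) then 2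
  else if c = (α.length, 0) then 3 else if U c = 0 then 0 else U c + 3

lemma chain_fill1 {α : List ℕ} {U} (h : SCTChain α U) : SCTChain (α ++ [1]) (fill1 α U) := by
  have hV := SCTChain.prepend SCTChain.nil
  have H := chain_append h hV
  convert H using 1
  funext c
  obtain ⟨a, b⟩ := c
  have hU0 : α.length ≤ a → U (a, b) = 0 := fun hle => by
    by_contra h'
    exact absurd (chain_support h (a, b) h').1 (by simp; omega)
  by_cases hle : α.length ≤ a
  · obtain ⟨k, rfl⟩ : ∃ k, a = α.length + k := ⟨a - α.length, by omega⟩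
    simp only [fill1, Prod.mk.injEq, List.sum_cons, List.sum_nil, hU0 hle,
      Nat.add_sub_cancel_left]
    split_ifs <;> (try (simp only [false_and, and_false, true_and, and_true, List.append_eq, List.sum_append, List.sum_cons, List.sum_nil] at *)) <;> first | contradiction | omega
  · simp only [fill1, Prod.mk.injEq, List.sum_cons, List.sum_nil]
    split_ifs <;> (try (simp only [false_and, and_false, true_and, and_true, List.append_eq, List.sum_append, List.sum_cons, List.sum_nil] at *)) <;> first | contradiction | omega

lemma chain_fill12 {α : List ℕ} {U} (h : SCTChain α U) :
    SCTChain (α ++ [1, 2]) (fill12 α U) := by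
  have hV := SCTChain.prepend
    (SCTChain.grow (SCTChain.prepend SCTChain.nil) 0 (by simp) (by intro j hj; omega))
  rw [show (1 :: List.set [1] 0 (List.getD [1] 0 0 + 1)) = [1, 2] from by simp] at hV
  have H := chain_append h hV
  convert H using 1
  funext c
  obtain ⟨a, b⟩ := c
  have hU0 : α.length ≤ a → U (a, b) = 0 := fun hle => by
    by_contra h'
    exact absurd (chain_support h (a, b) h').1 (by simp; omega)
  by_cases hle : α.length ≤ a
  · obtain ⟨k, rfl⟩ : ∃ k, a = α.length + k := ⟨a - α.length, by omega⟩
    simp only [fill12, Prod.mk.injEq, List.sum_cons, List.sum_nil, List.getD_cons_zero,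
      List.set_cons_zero, hU0 hle, Nat.add_sub_cancel_left]
    split_ifs <;> (try (simp only [false_and, and_false, true_and, and_true, List.append_eq, List.sum_append, List.sum_cons, List.sum_nil] at *)) <;> first | contradiction | omega
  · simp only [fill12, Prod.mk.injEq, List.sum_cons, List.sum_nil]
    split_ifs <;> (try (simp only [false_and, and_false, true_and, and_true, List.append_eq, List.sum_append, List.sum_cons, List.sum_nil] at *)) <;> first | contradiction | omega

/-! ### Inversion lemmas -/

lemma chain_nil_inv {U} (h : SCTChain [] U) : U = fun _ => 0 := by
  funext c
  by_contra hc
  have := (chain_support h c hc).1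
  simp at this

lemma chain_one {δ : List ℕ} {U} (h : SCTChain δ U) :
    δ = [1] → U = fun c => if c = ((0 : ℕ), (0 : ℕ)) then 1 else 0 := by
  induction h with
  | nil => simp
  | @prepend β U h ih =>
      intro hδ
      have hβ : β = [] := by simpa using hδ
      subst hβ
      rw [chain_nil_inv h]
      funext c
      obtain ⟨a, b⟩ := c
      try dsimp only
      split_ifs <;> simp
  | @grow β U h i hi hleft ih =>
      intro hδ
      exfalso
      have hlen : β.length = 1 := by
        have := congrArg List.length hδ
        simpa using this
      have hi0 : i = 0 := by omega
      subst hi0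
      obtain ⟨a, rfl⟩ := List.length_eq_one_iff.mp hlen
      have h1 := congrArg (fun l => l.getD 0 0) hδ
      rw [getD_set_self _ _ _ hi] at h1
      have := chain_pos h a (by simp)
      simp at h1
      omega

lemma chain_two {δ : List ℕ} {U} (h : SCTChain δ U) :
    δ = [2] → U = fun c => if c = ((0 : ℕ), (1 : ℕ)) then 2 else if c = (0, 0) then 1 else 0 := by
  induction h with
  | nil => simp
  | @prepend β U h ih =>
      intro hδ
      exfalso
      simp at hδ
  | @grow β U h i hi hleft ih =>
      intro hδ
      have hlen : β.length = 1 := by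
        have := congrArg List.length hδ
        simpa using this
      have hi0 : i = 0 := by omega
      subst hi0
      obtain ⟨a, rfl⟩ := List.length_eq_one_iff.mp hlen
      have h1 := congrArg (fun l => l.getD 0 0) hδ
      rw [getD_set_self _ _ _ hi] at h1
      simp only [List.getD_cons_zero] at h1
      have ha : a = 1 := by omega
      subst ha
      rw [chain_one h rfl]
      funext c
      obtain ⟨a, b⟩ := c
      try dsimp only
      simp only [List.getD_cons_zero, List.sum_cons, List.sum_nil, Prod.mk.injEq]
      split_ifs <;> (try (simp only [false_and, and_false, true_and, and_true, List.append_eq, List.sum_append, List.sum_cons, List.sum_nil] at *)) <;> first | contradiction | omega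

lemma back1 {δ : List ℕ} {W} (h : SCTChain δ W) :
    ∀ α, δ = α ++ [1] → ∃ U, SCTChain α U ∧ W = fill1 α U := by
  induction h with
  | nil => intro α hα; exact absurd hα (by simp)
  | @prepend β U h ih =>
      intro α hα
      cases α with
      | nil =>
          have hβ : β = [] := by simpa using hα
          subst hβ
          rw [chain_nil_inv h]
          refine ⟨fun _ => 0, SCTChain.nil, ?_⟩
          funext c
          obtain ⟨a, b⟩ := c
          try dsimp only
          simp only [fill1, Prod.mk.injEq, List.sum_nil, List.length_nil]
          split_ifs <;> (try (simp only [false_and, and_false, true_and, and_true, List.append_eq, List.sum_append, List.sum_cons, List.sum_nil] at *)) <;> first | contradiction | omega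
      | cons x α₀ =>
          injection hα with hx hβ
          subst hx
          subst hβ
          obtain ⟨U₀, hU₀, rfl⟩ := ih α₀ rfl
          refine ⟨fun c => if c = ((0 : ℕ), (0 : ℕ)) then α₀.sum + 1
            else if c.1 = 0 then 0 else U₀ (c.1 - 1, c.2), SCTChain.prepend hU₀, ?_⟩
          funext c
          obtain ⟨a, b⟩ := c
          rcases a with _ | k
          · dsimp only
            simp only [fill1, Prod.mk.injEq, List.sum_append, List.sum_cons, List.sum_nil,
              List.length_cons]
            split_ifs <;> (try (simp only [false_and, and_false, true_and, and_true, List.append_eq, List.sum_append, List.sum_cons, List.sum_nil] at *)) <;> first | contradiction | omega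
          · dsimp only
            simp only [fill1, Prod.mk.injEq, List.sum_append, List.sum_cons, List.sum_nil,
              List.length_cons, Nat.add_sub_cancel]
            split_ifs <;> (try (simp only [false_and, and_false, true_and, and_true, List.append_eq, List.sum_append, List.sum_cons, List.sum_nil] at *)) <;> first | contradiction | omega
  | @grow β U h i hi hleft ih =>
      intro α hα
      have hv : 0 < β.getD i 0 := by
        refine chain_pos h _ ?_
        rw [List.getD_eq_getElem β 0 hi]
        exact List.getElem_mem hi
      have hlen : β.length = α.length + 1 := by
        have := congrArg List.length hα
        simpa using this
      have hi' : i < α.length := by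
        rcases Nat.lt_or_ge i α.length with h' | h'
        · exact h'
        · exfalso
          have hie : i = α.length := by omega
          have h1 := congrArg (fun l => l.getD i 0) hα
          rw [getD_set_self β i _ hi] at h1
          have h2 : (α ++ [1]).getD i 0 = 1 := by
            rw [hie, List.getD_append_right _ _ _ _ (le_refl _), Nat.sub_self]
            simp
          omega
      have e1 : (β.set i (β.getD i 0 + 1)).set i (β.getD i 0) = β := by
        rw [List.set_set, set_getD_self β i hi]
      have hβ : β = (α.set i (β.getD i 0)) ++ [1] := by
        conv_lhs => rw [← e1, hα]
        rw [List.set_append_left _ _ hi']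
      have hgd : α.getD i 0 = β.getD i 0 + 1 := by
        have h1 := congrArg (fun l => l.getD i 0) hα
        rw [getD_set_self β i _ hi, List.getD_append _ _ _ _ hi'] at h1
        exact h1.symm
      have hαeq : (α.set i (β.getD i 0)).set i (β.getD i 0 + 1) = α := by
        rw [List.set_set, ← hgd, set_getD_self α i hi']
      obtain ⟨U₀, hU₀, rfl⟩ := ih (α.set i (β.getD i 0)) hβ
      have hgd2 : (α.set i (β.getD i 0)).getD i 0 = β.getD i 0 :=
        getD_set_self α i _ hi'
      have hβj : ∀ j < α.length, β.getD j 0 = (α.set i (β.getD i 0)).getD j 0 := by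
        intro j hj
        conv_lhs => rw [hβ]
        rw [List.getD_append _ _ _ _ (by rw [List.length_set]; exact hj)]
      have hleft1 : ∀ j < i, (α.set i (β.getD i 0)).getD j 0 ≠
          (α.set i (β.getD i 0)).getD i 0 := by
        intro j hj
        rw [hgd2, ← hβj j (by omega)]
        exact hleft j hj
      have H := SCTChain.grow hU₀ i (by rw [List.length_set]; exact hi') hleft1
      rw [hgd2, hαeq] at H
      refine ⟨_, H, ?_⟩
      have hsum : β.sum = (α.set i (β.getD i 0)).sum + 1 := by
        conv_lhs => rw [hβ]
        rw [List.sum_append]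
        simp
      funext c
      obtain ⟨a, b⟩ := c
      try dsimp only
      simp only [fill1, Prod.mk.injEq, List.length_set]
      split_ifs <;> (try (simp only [false_and, and_false, true_and, and_true, List.append_eq, List.sum_append, List.sum_cons, List.sum_nil] at *)) <;> first | contradiction | omega

lemma back12 {δ : List ℕ} {W} (h : SCTChain δ W) :
    ∀ α, δ = α ++ [1, 2] → ∃ U, SCTChain α U ∧ W = fill12 α U := by
  induction h with
  | nil => intro α hα; exact absurd hα (by simp)
  | @prepend β U h ih =>
      intro α hα
      cases α with
      | nil =>
          have hβ : β = [2] := by simpa using hα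
          subst hβ
          rw [chain_two h rfl]
          refine ⟨fun _ => 0, SCTChain.nil, ?_⟩
          funext c
          obtain ⟨a, b⟩ := c
          rcases a with _ | k
          · dsimp only
            simp only [fill12, Prod.mk.injEq, List.sum_cons, List.sum_nil, List.length_nil]
            split_ifs <;> (try (simp only [false_and, and_false, true_and, and_true, List.append_eq, List.sum_append, List.sum_cons, List.sum_nil] at *)) <;> first | contradiction | omega
          · dsimp only
            simp only [fill12, Prod.mk.injEq, List.sum_cons, List.sum_nil, List.length_nil,
              Nat.add_sub_cancel]
            split_ifs <;> (try (simp only [false_and, and_false, true_and, and_true, List.append_eq, List.sum_append, List.sum_cons, List.sum_nil] at *)) <;> first | contradiction | omega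
      | cons x α₀ =>
          injection hα with hx hβ
          subst hx
          subst hβ
          obtain ⟨U₀, hU₀, rfl⟩ := ih α₀ rfl
          refine ⟨fun c => if c = ((0 : ℕ), (0 : ℕ)) then α₀.sum + 1
            else if c.1 = 0 then 0 else U₀ (c.1 - 1, c.2), SCTChain.prepend hU₀, ?_⟩
          funext c
          obtain ⟨a, b⟩ := c
          rcases a with _ | k
          · dsimp only
            simp only [fill12, Prod.mk.injEq, List.sum_append, List.sum_cons, List.sum_nil,
              List.length_cons]
            split_ifs <;> (try (simp only [false_and, and_false, true_and, and_true, List.append_eq, List.sum_append, List.sum_cons, List.sum_nil] at *)) <;> first | contradiction | omega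
          · dsimp only
            simp only [fill12, Prod.mk.injEq, List.sum_append, List.sum_cons, List.sum_nil,
              List.length_cons, Nat.add_sub_cancel]
            split_ifs <;> (try (simp only [false_and, and_false, true_and, and_true, List.append_eq, List.sum_append, List.sum_cons, List.sum_nil] at *)) <;> first | contradiction | omega
  | @grow β U h i hi hleft ih =>
      intro α hα
      have hv : 0 < β.getD i 0 := by
        refine chain_pos h _ ?_
        rw [List.getD_eq_getElem β 0 hi]
        exact List.getElem_mem hi
      have hlen : β.length = α.length + 2 := by
        have := congrArg List.length hα
        simpa using this
      have h1 := congrArg (fun l => l.getD i 0) hα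
      rw [getD_set_self β i _ hi] at h1
      have hi' : i < α.length := by
        rcases Nat.lt_or_ge i α.length with h' | h'
        · exact h'
        · exfalso
          rcases Nat.lt_or_ge i (α.length + 1) with h'' | h''
          · -- i = α.length, new value would be 1
            have hie : i = α.length := by omega
            have h2 : (α ++ [1, 2]).getD i 0 = 1 := by
              rw [hie, List.getD_append_right _ _ _ _ (le_refl _), Nat.sub_self]
              simp
            omega
          · -- i = α.length + 1, contradiction with hleft at j = α.length
            have hie : i = α.length + 1 := by omega
            have h2 : (α ++ [1, 2]).getD i 0 = 2 := by
              rw [hie, List.getD_append_right _ _ _ _ (by omega)]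
              simp
            have h3 := hleft α.length (by omega)
            have h4 : β.getD α.length 0 = 1 := by
              have h5 := congrArg (fun l => l.getD α.length 0) hα
              rw [getD_set_ne β i _ α.length (by omega)] at h5
              rw [h5, List.getD_append_right _ _ _ _ (le_refl _), Nat.sub_self]
              simp
            omega
      have e1 : (β.set i (β.getD i 0 + 1)).set i (β.getD i 0) = β := by
        rw [List.set_set, set_getD_self β i hi]
      have hβ : β = (α.set i (β.getD i 0)) ++ [1, 2] := by
        conv_lhs => rw [← e1, hα]
        rw [List.set_append_left _ _ hi']
      have hgd : α.getD i 0 = β.getD i 0 + 1 := by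
        rw [List.getD_append _ _ _ _ hi'] at h1
        exact h1.symm
      have hαeq : (α.set i (β.getD i 0)).set i (β.getD i 0 + 1) = α := by
        rw [List.set_set, ← hgd, set_getD_self α i hi']
      obtain ⟨U₀, hU₀, rfl⟩ := ih (α.set i (β.getD i 0)) hβ
      have hgd2 : (α.set i (β.getD i 0)).getD i 0 = β.getD i 0 :=
        getD_set_self α i _ hi'
      have hβj : ∀ j < α.length, β.getD j 0 = (α.set i (β.getD i 0)).getD j 0 := by
        intro j hj
        conv_lhs => rw [hβ]
        rw [List.getD_append _ _ _ _ (by rw [List.length_set]; exact hj)]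
      have hleft1 : ∀ j < i, (α.set i (β.getD i 0)).getD j 0 ≠
          (α.set i (β.getD i 0)).getD i 0 := by
        intro j hj
        rw [hgd2, ← hβj j (by omega)]
        exact hleft j hj
      have H := SCTChain.grow hU₀ i (by rw [List.length_set]; exact hi') hleft1
      rw [hgd2, hαeq] at H
      refine ⟨_, H, ?_⟩
      have hsum : β.sum = (α.set i (β.getD i 0)).sum + 3 := by
        conv_lhs => rw [hβ]
        rw [List.sum_append]
        simp
      funext c
      obtain ⟨a, b⟩ := c
      try dsimp only
      simp only [fill12, Prod.mk.injEq, List.length_set]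
      split_ifs <;> (try (simp only [false_and, and_false, true_and, and_true, List.append_eq, List.sum_append, List.sum_cons, List.sum_nil] at *)) <;> first | contradiction | omega

end SCTAux

namespace SCTAux

/-! ### SCT-level facts -/

lemma sct_off {α : List ℕ} {T} (h : IsSCT α T) : ∀ c : ℕ × ℕ, α.length ≤ c.1 → T c = 0 := by
  obtain ⟨U, hU, rfl⟩ := h
  intro c hc
  by_cases h0 : U c = 0
  · simp [h0]
  · exact absurd (chain_support hU c h0).1 (by omega)

lemma sct_le {α : List ℕ} {T} (h : IsSCT α T) : ∀ c, T c ≤ α.sum := by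
  obtain ⟨U, hU, rfl⟩ := h
  intro c
  dsimp only
  split_ifs with h0
  · omega
  · omega

lemma sct_top {α : List ℕ} {T} (h : IsSCT α T) (hn : 0 < α.sum) :
    ∃ p : ℕ × ℕ, T p = α.sum ∧ p.2 = 0 := by
  obtain ⟨U, hU, rfl⟩ := h
  obtain ⟨p, hp⟩ := (chain_facts hU).2.1 1 one_pos hn
  refine ⟨p, ?_, chain_col1 hU p hp⟩
  simp [hp]

/-! ### The two extension maps and their inverses -/

def ext1 (α : List ℕ) (T : (ℕ × ℕ) → ℕ) : (ℕ × ℕ) → ℕ := fun c =>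
  if c = (α.length, 0) then α.sum + 1 else T c

def res1 (α : List ℕ) (T : (ℕ × ℕ) → ℕ) : (ℕ × ℕ) → ℕ := fun c =>
  if c = (α.length, 0) then 0 else T c

def ext12 (α : List ℕ) (T : (ℕ × ℕ) → ℕ) : (ℕ × ℕ) → ℕ := fun c =>
  if c = (α.length + 1, 0) then α.sum + 3 else if c = (α.length + 1, 1) then α.sum + 2
  else if c = (α.length, 0) then α.sum + 1 else T c

def res12 (α : List ℕ) (T : (ℕ × ℕ) → ℕ) : (ℕ × ℕ) → ℕ := fun c =>
  if c = (α.length + 1, 0) then 0 else if c = (α.length + 1, 1) then 0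
  else if c = (α.length, 0) then 0 else T c

lemma isSCT_ext1 {α : List ℕ} {T} (h : IsSCT α T) : IsSCT (α ++ [1]) (ext1 α T) := by
  obtain ⟨U, hU, rfl⟩ := h
  refine ⟨fill1 α U, chain_fill1 hU, ?_⟩
  have hb := (chain_facts hU).1
  funext c
  obtain ⟨a, b⟩ := c
  have := hb (a, b)
  simp only [ext1, fill1, List.sum_append, List.sum_cons, List.sum_nil, Prod.mk.injEq]
  split_ifs <;> (try (simp only [false_and, and_false, true_and, and_true, List.append_eq, List.sum_append, List.sum_cons, List.sum_nil] at *)) <;> first | contradiction | omega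

lemma back1_sct {α : List ℕ} {T'} (h : IsSCT (α ++ [1]) T') :
    IsSCT α (res1 α T') ∧ ext1 α (res1 α T') = T' := by
  obtain ⟨W, hW, rfl⟩ := h
  obtain ⟨U, hU, rfl⟩ := back1 hW α rfl
  have hb := (chain_facts hU).1
  have hU0 : U (α.length, 0) = 0 := by
    by_contra h'
    exact absurd (chain_support hU _ h').1 (by simp)
  constructor
  · refine ⟨U, hU, ?_⟩
    funext c
    obtain ⟨a, b⟩ := c
    have := hb (a, b)
    by_cases hc : ((a, b) : ℕ × ℕ) = (α.length, 0)
    · rw [Prod.mk.injEq] at hc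
      obtain ⟨rfl, rfl⟩ := hc
      simp [res1, hU0]
    · simp only [res1, if_neg hc]
      simp only [fill1, if_neg hc, List.sum_append, List.sum_cons, List.sum_nil]
      try beta_reduce
      split_ifs <;> first | contradiction | omega
  · funext c
    obtain ⟨a, b⟩ := c
    by_cases hc : ((a, b) : ℕ × ℕ) = (α.length, 0)
    · simp only [ext1, if_pos hc]
      rw [hc]
      simp [fill1, List.sum_append]
    · simp only [ext1, res1, if_neg hc]

lemma isSCT_ext12 {α : List ℕ} {T} (h : IsSCT α T) : IsSCT (α ++ [1, 2]) (ext12 α T) := by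
  obtain ⟨U, hU, rfl⟩ := h
  refine ⟨fill12 α U, chain_fill12 hU, ?_⟩
  have hb := (chain_facts hU).1
  funext c
  obtain ⟨a, b⟩ := c
  have := hb (a, b)
  simp only [ext12, fill12, List.sum_append, List.sum_cons, List.sum_nil, Prod.mk.injEq]
  split_ifs <;> (try (simp only [false_and, and_false, true_and, and_true, List.append_eq, List.sum_append, List.sum_cons, List.sum_nil] at *)) <;> first | contradiction | omega

lemma back12_sct {α : List ℕ} {T'} (h : IsSCT (α ++ [1, 2]) T') :
    IsSCT α (res12 α T') ∧ ext12 α (res12 α T') = T' := by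
  obtain ⟨W, hW, rfl⟩ := h
  obtain ⟨U, hU, rfl⟩ := back12 hW α rfl
  have hb := (chain_facts hU).1
  have hU1 : U (α.length + 1, 0) = 0 := by
    by_contra h'
    exact absurd (chain_support hU _ h').1 (by simp)
  have hU2 : U (α.length + 1, 1) = 0 := by
    by_contra h'
    exact absurd (chain_support hU _ h').1 (by simp)
  have hU3 : U (α.length, 0) = 0 := by
    by_contra h'
    exact absurd (chain_support hU _ h').1 (by simp)
  constructor
  · refine ⟨U, hU, ?_⟩
    funext c
    obtain ⟨a, b⟩ := c
    have := hb (a, b)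
    by_cases hc1 : ((a, b) : ℕ × ℕ) = (α.length + 1, 0)
    · rw [Prod.mk.injEq] at hc1
      obtain ⟨rfl, rfl⟩ := hc1
      simp [res12, hU1]
    by_cases hc2 : ((a, b) : ℕ × ℕ) = (α.length + 1, 1)
    · rw [Prod.mk.injEq] at hc2
      obtain ⟨rfl, rfl⟩ := hc2
      simp only [res12, if_neg hc1, if_pos rfl]
      rw [hU2]
      simp
    by_cases hc3 : ((a, b) : ℕ × ℕ) = (α.length, 0)
    · rw [Prod.mk.injEq] at hc3
      obtain ⟨rfl, rfl⟩ := hc3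
      simp only [res12, if_neg hc1, if_neg hc2, if_pos rfl]
      rw [hU3]
      simp
    · simp only [res12, if_neg hc1, if_neg hc2, if_neg hc3]
      simp only [fill12, if_neg hc1, if_neg hc2, if_neg hc3, List.sum_append,
        List.sum_cons, List.sum_nil]
      try beta_reduce
      split_ifs <;> first | contradiction | omega
  · funext c
    obtain ⟨a, b⟩ := c
    by_cases hc1 : ((a, b) : ℕ × ℕ) = (α.length + 1, 0)
    · simp only [ext12, if_pos hc1]
      rw [hc1]
      simp [fill12, List.sum_append]
    by_cases hc2 : ((a, b) : ℕ × ℕ) = (α.length + 1, 1)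
    · simp only [ext12, if_neg hc1, if_pos hc2]
      rw [hc2]
      have hne : ((α.length + 1, 1) : ℕ × ℕ) ≠ (α.length + 1, 0) := by
        simp only [ne_eq, Prod.mk.injEq]; omega
      simp [fill12, List.sum_append]
      try omega
    by_cases hc3 : ((a, b) : ℕ × ℕ) = (α.length, 0)
    · simp only [ext12, if_neg hc1, if_neg hc2, if_pos hc3]
      rw [hc3]
      have hne1 : ((α.length, 0) : ℕ × ℕ) ≠ (α.length + 1, 0) := by
        simp only [ne_eq, Prod.mk.injEq]; omega
      have hne2 : ((α.length, 0) : ℕ × ℕ) ≠ (α.length + 1, 1) := by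
        simp only [ne_eq, Prod.mk.injEq]; omega
      simp [fill12, List.sum_append]
      try omega
    · simp only [ext12, res12, if_neg hc1, if_neg hc2, if_neg hc3]

/-! ### The bijections -/

def equiv1 (α : List ℕ) : {T // IsSCT α T} ≃ {T // IsSCT (α ++ [1]) T} where
  toFun T := ⟨ext1 α T.1, isSCT_ext1 T.2⟩
  invFun T := ⟨res1 α T.1, (back1_sct T.2).1⟩
  left_inv T := by
    apply Subtype.ext
    funext c
    by_cases hc : c = ((α.length, 0) : ℕ × ℕ)
    · simp only [res1, ext1, if_pos hc]
      rw [hc]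
      exact (sct_off T.2 _ (le_refl _)).symm
    · simp only [res1, ext1, if_neg hc]
  right_inv T := Subtype.ext (back1_sct T.2).2

def equiv12 (α : List ℕ) : {T // IsSCT α T} ≃ {T // IsSCT (α ++ [1, 2]) T} where
  toFun T := ⟨ext12 α T.1, isSCT_ext12 T.2⟩
  invFun T := ⟨res12 α T.1, (back12_sct T.2).1⟩
  left_inv T := by
    apply Subtype.ext
    funext c
    by_cases hc1 : c = ((α.length + 1, 0) : ℕ × ℕ)
    · simp only [res12, ext12, if_pos hc1]
      rw [hc1]
      exact (sct_off T.2 _ (by simp)).symm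
    by_cases hc2 : c = ((α.length + 1, 1) : ℕ × ℕ)
    · simp only [res12, ext12, if_neg hc1, if_pos hc2]
      rw [hc2]
      exact (sct_off T.2 _ (by simp)).symm
    by_cases hc3 : c = ((α.length, 0) : ℕ × ℕ)
    · simp only [res12, ext12, if_neg hc1, if_neg hc2, if_pos hc3]
      rw [hc3]
      exact (sct_off T.2 _ (le_refl _)).symm
    · simp only [res12, ext12, if_neg hc1, if_neg hc2, if_neg hc3]
  right_inv T := Subtype.ext (back12_sct T.2).2

lemma equiv1_apply (α : List ℕ) (T : {T // IsSCT α T}) :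
    ((equiv1 α) T).1 = ext1 α T.1 := rfl

lemma equiv12_apply (α : List ℕ) (T : {T // IsSCT α T}) :
    ((equiv12 α) T).1 = ext12 α T.1 := rfl

end SCTAux

namespace SCTAux

/-! ### Descent sets of the extensions -/

lemma desC_ext1 {α : List ℕ} {T} (h : IsSCT α T) :
    desC (ext1 α T) = desC T ∪ {s | 0 < s ∧ s = α.sum} := by
  have hoff := sct_off h
  have hle := sct_le h
  ext i
  simp only [desC, Set.mem_union, Set.mem_setOf_eq]
  constructor
  · rintro ⟨hi, p, q, hp, hq, hpq⟩
    by_cases hiA : i = α.sum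
    · exact Or.inr ⟨hi, hiA⟩
    · left
      have hq' : q ≠ (α.length, 0) := by
        intro h0
        rw [h0] at hq
        simp [ext1] at hq
        omega
      have hTq : T q = i + 1 := by
        simp only [ext1, if_neg hq'] at hq
        exact hq
      have hp' : p ≠ (α.length, 0) := by
        intro h0
        rw [h0] at hp
        simp [ext1] at hp
        have h2 := hle q
        omega
      have hTp : T p = i := by
        simp only [ext1, if_neg hp'] at hp
        exact hp
      exact ⟨hi, p, q, hTp, hTq, hpq⟩
  · rintro (⟨hi, p, q, hp, hq, hpq⟩ | ⟨hi, hiA⟩)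
    · refine ⟨hi, p, q, ?_, ?_, hpq⟩
      · have hp' : p ≠ (α.length, 0) := by
          intro h0
          rw [h0, hoff _ (le_refl _)] at hp
          omega
        simp only [ext1, if_neg hp']
        exact hp
      · have hq' : q ≠ (α.length, 0) := by
          intro h0
          rw [h0, hoff _ (le_refl _)] at hq
          omega
        simp only [ext1, if_neg hq']
        exact hq
    · subst hiA
      obtain ⟨p, hp, hp2⟩ := sct_top h hi
      have hp' : p ≠ (α.length, 0) := by
        intro h0
        rw [h0, hoff _ (le_refl _)] at hp
        omega
      refine ⟨hi, p, (α.length, 0), ?_, ?_, ?_⟩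
      · simp only [ext1, if_neg hp']
        exact hp
      · simp [ext1]
      · simp [hp2]

lemma desC_ext12 {α : List ℕ} {T} (h : IsSCT α T) :
    desC (ext12 α T) = desC T ∪ {s | 0 < s ∧ (s = α.sum ∨ s = α.sum + 1)} := by
  have hoff := sct_off h
  have hle := sct_le h
  have hne12 : ((α.length + 1, 1) : ℕ × ℕ) ≠ (α.length + 1, 0) := by
    simp only [ne_eq, Prod.mk.injEq]; omega
  have hne31 : ((α.length, 0) : ℕ × ℕ) ≠ (α.length + 1, 0) := by
    simp only [ne_eq, Prod.mk.injEq]; omega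
  have hne32 : ((α.length, 0) : ℕ × ℕ) ≠ (α.length + 1, 1) := by
    simp only [ne_eq, Prod.mk.injEq]; omega
  have hv1 : ext12 α T (α.length + 1, 0) = α.sum + 3 := by
    simp [ext12]
  have hv2 : ext12 α T (α.length + 1, 1) = α.sum + 2 := by
    simp only [ext12]
    rw [if_neg hne12]
    simp
  have hv3 : ext12 α T (α.length, 0) = α.sum + 1 := by
    simp only [ext12]
    rw [if_neg hne31, if_neg hne32]
    simp
  have hvT : ∀ c : ℕ × ℕ, c ≠ (α.length + 1, 0) → c ≠ (α.length + 1, 1) →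
      c ≠ (α.length, 0) → ext12 α T c = T c := by
    intro c h1 h2 h3
    simp only [ext12]
    rw [if_neg h1, if_neg h2, if_neg h3]
  have hfresh : ∀ c : ℕ × ℕ, T c ≠ 0 → ext12 α T c = T c := by
    intro c hc
    refine hvT c ?_ ?_ ?_ <;>
      (intro h0; rw [h0] at hc; exact hc (hoff _ (by simp)))
  ext i
  simp only [desC, Set.mem_union, Set.mem_setOf_eq]
  constructor
  · rintro ⟨hi, p, q, hp, hq, hpq⟩
    by_cases hiA : i = α.sum ∨ i = α.sum + 1
    · exact Or.inr ⟨hi, hiA⟩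
    · left
      push_neg at hiA
      by_cases hq1 : q = (α.length + 1, 0)
      · exfalso
        rw [hq1, hv1] at hq
        by_cases hp1 : p = (α.length + 1, 0)
        · rw [hp1, hv1] at hp; omega
        by_cases hp2 : p = (α.length + 1, 1)
        · rw [hp2, hq1] at hpq
          simp at hpq
        by_cases hp3 : p = (α.length, 0)
        · rw [hp3, hv3] at hp; omega
        · rw [hvT p hp1 hp2 hp3] at hp
          have := hle p
          omega
      by_cases hq2 : q = (α.length + 1, 1)
      · exfalso
        rw [hq2, hv2] at hq
        omega
      by_cases hq3 : q = (α.length, 0)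
      · exfalso
        rw [hq3, hv3] at hq
        omega
      rw [hvT q hq1 hq2 hq3] at hq
      have hqle := hle q
      by_cases hp1 : p = (α.length + 1, 0)
      · rw [hp1, hv1] at hp; omega
      by_cases hp2 : p = (α.length + 1, 1)
      · rw [hp2, hv2] at hp; omega
      by_cases hp3 : p = (α.length, 0)
      · rw [hp3, hv3] at hp; omega
      rw [hvT p hp1 hp2 hp3] at hp
      exact ⟨hi, p, q, hp, hq, hpq⟩
  · rintro (⟨hi, p, q, hp, hq, hpq⟩ | ⟨hi, hiA | hiA⟩)
    · refine ⟨hi, p, q, ?_, ?_, hpq⟩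
      · rw [hfresh p (by omega)]
        exact hp
      · rw [hfresh q (by omega)]
        exact hq
    · subst hiA
      obtain ⟨p, hp, hp2⟩ := sct_top h hi
      refine ⟨hi, p, (α.length, 0), ?_, by rw [hv3], by simp [hp2]⟩
      rw [hfresh p (by omega)]
      exact hp
    · subst hiA
      exact ⟨by omega, (α.length, 0), (α.length + 1, 1), by rw [hv3], by rw [hv2], by simp⟩

/-! ### Union identities for the partial-sum sets -/

lemma union1 (α γ' : List ℕ) :
    ({s | 0 < s ∧ s = α.sum} ∪
      {s | 0 < s ∧ ∃ i < γ'.length, s = (α ++ [1]).sum + (γ'.take i).sum}) =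
    {s | 0 < s ∧ ∃ i < (1 :: γ').length, s = α.sum + ((1 :: γ').take i).sum} := by
  ext s
  simp only [Set.mem_union, Set.mem_setOf_eq, List.sum_append, List.sum_cons, List.sum_nil,
    List.length_cons]
  constructor
  · rintro (⟨hs, rfl⟩ | ⟨hs, i, hi, rfl⟩)
    · exact ⟨hs, 0, by omega, by simp⟩
    · refine ⟨hs, i + 1, by omega, ?_⟩
      simp [List.take_succ_cons]
      omega
  · rintro ⟨hs, i, hi, rfl⟩
    rcases i with _ | j
    · left
      exact ⟨hs, by simp⟩
    · right
      refine ⟨hs, j, by omega, ?_⟩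
      simp [List.take_succ_cons]
      omega
  
lemma union12 (α γ' : List ℕ) :
    ({s | 0 < s ∧ (s = α.sum ∨ s = α.sum + 1)} ∪
      {s | 0 < s ∧ ∃ i < γ'.length, s = (α ++ [1, 2]).sum + (γ'.take i).sum}) =
    {s | 0 < s ∧ ∃ i < (1 :: 2 :: γ').length, s = α.sum + ((1 :: 2 :: γ').take i).sum} := by
  ext s
  simp only [Set.mem_union, Set.mem_setOf_eq, List.sum_append, List.sum_cons, List.sum_nil,
    List.length_cons]
  constructor
  · rintro (⟨hs, rfl | rfl⟩ | ⟨hs, i, hi, rfl⟩)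
    · exact ⟨hs, 0, by omega, by simp⟩
    · exact ⟨hs, 1, by omega, by simp⟩
    · refine ⟨hs, i + 2, by omega, ?_⟩
      simp [List.take_succ_cons]
      omega
  · rintro ⟨hs, i, hi, rfl⟩
    rcases i with _ | _ | j
    · exact Or.inl ⟨hs, Or.inl (by simp)⟩
    · exact Or.inl ⟨hs, Or.inr (by simp)⟩
    · right
      refine ⟨hs, j, by omega, ?_⟩
      simp [List.take_succ_cons]
      omega

end SCTAux

open SCTAux

/-- For `γ ∈ C₂` there is a bijection between the standard composition
tableaux of shape `α` and those of shape `α·γ`, under which an SCT of shape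
`α` with descent composition `β` corresponds to an SCT of shape `α·γ` with
descent composition `β·γ`, i.e. with descent set enlarged by the partial
sums `{|α| + γ₁ + ⋯ + γᵢ : 0 ≤ i < ℓ(γ)}`.  In particular
`d_{(α·γ)(β·γ)} = d_{αβ}` for all `β`, and every SCT of shape `α·γ` has
descent composition of the form `β·γ`. -/
theorem sct_append_c2_bijection (α γ : List ℕ) (hpos : ∀ x ∈ α, 0 < x)
    (hγ : InC2 γ) :
    ∃ e : {T // IsSCT α T} ≃ {T // IsSCT (α ++ γ) T},
      ∀ T, desC (e T).1 = desC T.1 ∪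
        {s | 0 < s ∧ ∃ i < γ.length, s = α.sum + (γ.take i).sum} := by
  clear hpos
  induction hγ generalizing α with
  | nil =>
      rw [List.append_nil]
      refine ⟨Equiv.refl _, fun T => ?_⟩
      have h0 : {s : ℕ | 0 < s ∧ ∃ i < ([] : List ℕ).length, s = α.sum + (([] : List ℕ).take i).sum}
          = ∅ := by
        ext s
        simp
      rw [h0, Set.union_empty]
      rfl
  | @one γ' hγ' ih =>
      obtain ⟨e', he'⟩ := ih (α ++ [1])
      rw [show α ++ 1 :: γ' = (α ++ [1]) ++ γ' from by simp]
      refine ⟨(equiv1 α).trans e', fun T => ?_⟩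
      rw [Equiv.trans_apply, he', equiv1_apply, desC_ext1 T.2, Set.union_assoc, union1]
  | @one_two γ' hγ' ih =>
      obtain ⟨e', he'⟩ := ih (α ++ [1, 2])
      rw [show α ++ 1 :: 2 :: γ' = (α ++ [1, 2]) ++ γ' from by simp]
      refine ⟨(equiv12 α).trans e', fun T => ?_⟩
      rw [Equiv.trans_apply, he', equiv12_apply, desC_ext12 T.2, Set.union_assoc, union12]
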